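/- arXiv:1701.02552 — 2 statements merged into one kernel-verified Lean document; each statement's English description precedes it below -/
import Mathlib

section
/- (Theorem 1, phase-shifter bullet.) Consider the parallel gate configuration with a single phase shifter in path j with phase ω (S = {j}), all other paths free (F = {1,…,N}∖{j}), and no detectors or beam splitters (D = ∅, B = ∅). Let z ∈ ℂ^N be a unit vector and p ∈ [z]. Then the output measure pK belongs to [z'], where z'_j = e^{iω} z_j and z'_m = z_m for all m ≠ j. -/
open MeasureTheory
open scoped Classical

namespace SPI

/-! ## Ontology -/

/-- Ontic states: particle position `q`, field amplitudes `u`, field strengths `τ`. -/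
abbrev Lam (N : ℕ) := Fin N × (Fin N → ℂ) × (Fin N → ℝ)

/-- The constraint region of `Λ`: `|u j| ≤ 1` and `τ j ∈ [0,1]`. -/
def onticSet (N : ℕ) : Set (Lam N) :=
  {l | (∀ j, ‖l.2.1 j‖ ≤ 1) ∧ ∀ j, l.2.2 j ∈ Set.Icc (0 : ℝ) 1}

/-- Highest field strength `τ_max`. -/
noncomputable def tmax {N : ℕ} (τ : Fin N → ℝ) : ℝ := ⨆ j, τ j

/-- `Δ_τ u` : the amplitude vector with only maximal-strength entries retained. -/
noncomputable def deltaVec {N : ℕ} (τ : Fin N → ℝ) (u : Fin N → ℂ) : Fin N → ℂ :=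
  fun j => if τ j = tmax τ then u j else 0

/-- Proportionality `z ∼ z'` of complex vectors (a nonzero multiple). -/
def Propto {N : ℕ} (v w : Fin N → ℂ) : Prop := ∃ α : ℂ, α ≠ 0 ∧ v = α • w

/-- The subset `Λ_z^i` of the ontic state space. -/
def lamSet {N : ℕ} (z : Fin N → ℂ) (i : Fin N) : Set (Lam N) :=
  {l | l.1 = i ∧ l.2.2 i = tmax l.2.2 ∧ 0 < tmax l.2.2 ∧ Propto (deltaVec l.2.2 l.2.1) z}

/-- Membership in the auxiliary class `[z]_i`: a (Borel) probability measure giving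
full measure to `Λ_z^i`. -/
def memClassI {N : ℕ} (z : Fin N → ℂ) (i : Fin N) (μ : Measure (Lam N)) : Prop :=
  IsProbabilityMeasure μ ∧ μ (lamSet z i) = 1

/-- Membership in the class `[z]` (for a unit vector `z`): mixtures `∑ |z i|² • pᵢ`
with `pᵢ ∈ [z]_i` (terms with `z i = 0` omitted). -/
def memClass {N : ℕ} (z : Fin N → ℂ) (μ : Measure (Lam N)) : Prop :=
  ∃ f : Fin N → Measure (Lam N),
    (∀ i, z i ≠ 0 → memClassI z i (f i)) ∧
    μ = ∑ i, ENNReal.ofReal (‖z i‖ ^ 2) • f i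

/-- The `j`-th standard basis vector of `ℂ^N`. -/
def eVec {N : ℕ} (j : Fin N) : Fin N → ℂ := fun m => if m = j then 1 else 0

/-! ## Parallel gate configurations -/

/-- A parallel gate configuration: a partition of the paths `{1,…,N}` into free paths `Fr`,
detector paths `De`, phase-shifter paths `Sh` (phases `ω`), and a collection `Bs` of pairwise
disjoint pairs (beam splitters with constants `R`, `T`, `R + T = 1`). -/
structure Config (N : ℕ) where
  Fr : Finset (Fin N)
  De : Finset (Fin N)
  Sh : Finset (Fin N)
  ω : Fin N → ℝ
  Bs : Finset (Fin N × Fin N)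
  R : Fin N × Fin N → ℝ
  T : Fin N × Fin N → ℝ
  hR : ∀ p ∈ Bs, 0 ≤ R p
  hT : ∀ p ∈ Bs, 0 ≤ T p
  hRT : ∀ p ∈ Bs, R p + T p = 1
  hst : ∀ p ∈ Bs, p.1 ≠ p.2
  hBB : ∀ p ∈ Bs, ∀ q ∈ Bs, p ≠ q → p.1 ≠ q.1 ∧ p.1 ≠ q.2 ∧ p.2 ≠ q.1 ∧ p.2 ≠ q.2
  hFD : Disjoint Fr De
  hFS : Disjoint Fr Sh
  hDS : Disjoint De Sh
  hBdisj : ∀ p ∈ Bs, p.1 ∉ Fr ∧ p.2 ∉ Fr ∧ p.1 ∉ De ∧ p.2 ∉ De ∧ p.1 ∉ Sh ∧ p.2 ∉ Sh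
  hcover : ∀ m : Fin N, m ∈ Fr ∨ m ∈ De ∨ m ∈ Sh ∨ ∃ p ∈ Bs, m = p.1 ∨ m = p.2

/-- Path `m` enters some beam splitter of the configuration. -/
def inB {N : ℕ} (c : Config N) (m : Fin N) : Prop := ∃ p ∈ c.Bs, m = p.1 ∨ m = p.2

/-- The new field strengths `τ'` produced by the parallel gates. -/
noncomputable def newTau {N : ℕ} (c : Config N) (q : Fin N) (τ : Fin N → ℝ) : Fin N → ℝ :=
  fun m =>
    if m ∈ c.De then (if q = m then 1 else 0)
    else if hm : inB c m then max (τ hm.choose.1) (τ hm.choose.2) / 2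
    else τ m / 2

/-- The new field amplitudes `u'` produced by the parallel gates. -/
noncomputable def newAmp {N : ℕ} (c : Config N) (q : Fin N) (u : Fin N → ℂ) (τ : Fin N → ℝ) :
    Fin N → ℂ :=
  fun m =>
    if m ∈ c.De then (if q = m then 1 else u m)
    else if m ∈ c.Sh then Complex.exp (Complex.I * (c.ω m : ℂ)) * u m
    else if hm : inB c m then
      (let p := hm.choose
       let ts := max (τ p.1) (τ p.2)
       let us : ℂ := if τ p.1 = ts then u p.1 else 0
       let ut : ℂ := if τ p.2 = ts then u p.2 else 0
       if m = p.1 then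
         Complex.I * (Real.sqrt (c.R p) : ℂ) * us + (Real.sqrt (c.T p) : ℂ) * ut
       else
         (Real.sqrt (c.T p) : ℂ) * us + Complex.I * (Real.sqrt (c.R p) : ℂ) * ut)
    else u m

/-- One step of the dynamics: the Markov kernel `K` of the parallel gate configuration,
as a measure-valued map on ontic states. -/
noncomputable def step {N : ℕ} (c : Config N) (l : Lam N) : Measure (Lam N) :=
  let q := l.1
  let u' := newAmp c q l.2.1 l.2.2
  let τ' := newTau c q l.2.2
  if hq : inB c q then
    (let p := hq.choose
     let a := ‖u' p.1‖ ^ 2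
     let b := ‖u' p.2‖ ^ 2
     if a + b = 0 then Measure.dirac (q, u', τ')
     else ENNReal.ofReal (a / (a + b)) • Measure.dirac (p.1, u', τ')
        + ENNReal.ofReal (b / (a + b)) • Measure.dirac (p.2, u', τ'))
  else Measure.dirac (q, u', τ')

/-- The output measure `pK` of the kernel applied to an input measure `p`. -/
noncomputable def out {N : ℕ} (c : Config N) (μ : Measure (Lam N)) : Measure (Lam N) :=
  μ.bind (step c)

/-! ## Interferometric matrices -/

/-- The projector `P_j` onto component `j`. -/
def Pmat {N : ℕ} (j : Fin N) : Matrix (Fin N) (Fin N) ℂ :=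
  Matrix.diagonal (fun a => if a = j then 1 else 0)

/-- The phase-shifter matrix `S_k(ω)`. -/
noncomputable def Smat {N : ℕ} (k : Fin N) (ω : ℝ) : Matrix (Fin N) (Fin N) ℂ :=
  Matrix.diagonal (fun a => if a = k then Complex.exp (Complex.I * (ω : ℂ)) else 1)

/-- The beam-splitter matrix `B_st(R,T)`: identity outside `{s,t}` and
`[[i√R, √T],[√T, i√R]]` on components `{s,t}`. -/
noncomputable def Bmat {N : ℕ} (s t : Fin N) (R T : ℝ) : Matrix (Fin N) (Fin N) ℂ :=
  Matrix.of fun a b =>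
    if a = s then
      (if b = s then Complex.I * (Real.sqrt R : ℂ) else if b = t then (Real.sqrt T : ℂ) else 0)
    else if a = t then
      (if b = s then (Real.sqrt T : ℂ) else if b = t then Complex.I * (Real.sqrt R : ℂ) else 0)
    else if a = b then 1 else 0

/-- The matrix `Δ_τ` selecting the components of maximal strength. -/
noncomputable def Dmat {N : ℕ} (τ : Fin N → ℝ) : Matrix (Fin N) (Fin N) ℂ :=
  Matrix.diagonal (fun j => if τ j = tmax τ then 1 else 0)

/-- The matrix `Δ^(st)_τ` with `δ_{τ_s,max(τ_s,τ_t)}`, `δ_{τ_t,max(τ_s,τ_t)}` at `s`, `t`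
and `1` elsewhere on the diagonal. -/
noncomputable def DmatST {N : ℕ} (τ : Fin N → ℝ) (s t : Fin N) : Matrix (Fin N) (Fin N) ℂ :=
  Matrix.diagonal (fun m =>
    if m = s then (if τ s = max (τ s) (τ t) then 1 else 0)
    else if m = t then (if τ t = max (τ s) (τ t) then 1 else 0)
    else 1)

/-! ## Commutation lemmas -/

lemma commute_diagonal {N : ℕ} (d e : Fin N → ℂ) :
    Commute (Matrix.diagonal d) (Matrix.diagonal e) := by
  have h : (fun i => d i * e i) = fun i => e i * d i := funext fun i => mul_comm _ _
  show Matrix.diagonal d * Matrix.diagonal e = Matrix.diagonal e * Matrix.diagonal d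
  rw [Matrix.diagonal_mul_diagonal, Matrix.diagonal_mul_diagonal, h]

lemma oneSubP_diagonal {N : ℕ} (j : Fin N) :
    (1 : Matrix (Fin N) (Fin N) ℂ) - Pmat j
      = Matrix.diagonal (fun a => 1 - if a = j then 1 else 0) := by
  rw [Pmat, ← Matrix.diagonal_one, Matrix.diagonal_sub]

lemma commute_oneSubP {N : ℕ} (j j' : Fin N) :
    Commute ((1 : Matrix (Fin N) (Fin N) ℂ) - Pmat j) (1 - Pmat j') := by
  rw [oneSubP_diagonal, oneSubP_diagonal]; exact commute_diagonal _ _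

/-- A matrix which differs from the identity only inside the block `{s,t} × {s,t}`. -/
def IsBlock {N : ℕ} (s t : Fin N) (M : Matrix (Fin N) (Fin N) ℂ) : Prop :=
  ∀ a b, ¬((a = s ∨ a = t) ∧ (b = s ∨ b = t)) →
    M a b = (1 : Matrix (Fin N) (Fin N) ℂ) a b

lemma commute_of_isBlock {N : ℕ} {s t s' t' : Fin N} {M M' : Matrix (Fin N) (Fin N) ℂ}
    (hM : IsBlock s t M) (hM' : IsBlock s' t' M')
    (h1 : s ≠ s') (h2 : s ≠ t') (h3 : t ≠ s') (h4 : t ≠ t') : Commute M M' := by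
  have hrow : ∀ a b : Fin N, a ≠ s → a ≠ t → (M - 1) a b = 0 := by
    intro a b ha hb
    have h := hM a b (by tauto)
    simp [Matrix.sub_apply, h]
  have hcol : ∀ a b : Fin N, b ≠ s → b ≠ t → (M - 1) a b = 0 := by
    intro a b hb1 hb2
    have h := hM a b (by tauto)
    simp [Matrix.sub_apply, h]
  have hrow' : ∀ a b : Fin N, a ≠ s' → a ≠ t' → (M' - 1) a b = 0 := by
    intro a b ha hb
    have h := hM' a b (by tauto)
    simp [Matrix.sub_apply, h]
  have hcol' : ∀ a b : Fin N, b ≠ s' → b ≠ t' → (M' - 1) a b = 0 := by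
    intro a b hb1 hb2
    have h := hM' a b (by tauto)
    simp [Matrix.sub_apply, h]
  have hEE' : (M - 1) * (M' - 1) = 0 := by
    ext a b
    rw [Matrix.mul_apply, Matrix.zero_apply]
    apply Finset.sum_eq_zero
    intro k _
    by_cases hk : k = s ∨ k = t
    · have : (M' - 1) k b = 0 := by
        rcases hk with h | h
        · subst h; exact hrow' _ _ h1 h2
        · subst h; exact hrow' _ _ h3 h4
      rw [this, mul_zero]
    · push_neg at hk
      rw [hcol a k hk.1 hk.2, zero_mul]
  have hE'E : (M' - 1) * (M - 1) = 0 := by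
    ext a b
    rw [Matrix.mul_apply, Matrix.zero_apply]
    apply Finset.sum_eq_zero
    intro k _
    by_cases hk : k = s' ∨ k = t'
    · have : (M - 1) k b = 0 := by
        rcases hk with h | h
        · subst h; exact hrow _ _ (Ne.symm h1) (Ne.symm h3)
        · subst h; exact hrow _ _ (Ne.symm h2) (Ne.symm h4)
      rw [this, mul_zero]
    · push_neg at hk
      rw [hcol' a k hk.1 hk.2, zero_mul]
  have expand : ∀ A B : Matrix (Fin N) (Fin N) ℂ,
      A * B = (A - 1) * (B - 1) + A + B - 1 := by
    intro A B; noncomm_ring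
  unfold Commute SemiconjBy
  rw [expand M M', expand M' M, hEE', hE'E]
  abel

lemma isBlock_Bmat {N : ℕ} (s t : Fin N) (R T : ℝ) : IsBlock s t (Bmat s t R T) := by
  intro a b hab
  by_cases has : a = s ∨ a = t
  · have hbs : ¬(b = s ∨ b = t) := fun h => hab ⟨has, h⟩
    push_neg at hbs
    have hb : a ≠ b := by
      rcases has with h | h <;> subst h
      · exact fun hc => hbs.1 hc.symm
      · exact fun hc => hbs.2 hc.symm
    rw [Matrix.one_apply_ne hb]
    rcases has with h | h <;> subst h <;> simp [Bmat, hbs.1, hbs.2]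
  · push_neg at has
    simp [Bmat, Matrix.one_apply, has.1, has.2]

lemma isBlock_one_sub_Pmat {N : ℕ} (j : Fin N) :
    IsBlock j j ((1 : Matrix (Fin N) (Fin N) ℂ) - Pmat j) := by
  intro a b hab
  have haj : a ≠ j ∨ b ≠ j := by tauto
  rw [oneSubP_diagonal]
  by_cases h : a = b
  · subst h
    have haj' : a ≠ j := by tauto
    simp [Matrix.diagonal_apply_eq, Matrix.one_apply_eq, haj']
  · simp [Matrix.diagonal_apply_ne _ h, Matrix.one_apply_ne h]

lemma isBlock_Smat {N : ℕ} (k : Fin N) (ω : ℝ) : IsBlock k k (Smat k ω) := by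
  intro a b hab
  have haj : a ≠ k ∨ b ≠ k := by tauto
  by_cases h : a = b
  · subst h
    have haj' : a ≠ k := by tauto
    simp [Smat, Matrix.diagonal_apply_eq, Matrix.one_apply_eq, haj']
  · simp [Smat, Matrix.diagonal_apply_ne _ h, Matrix.one_apply_ne h]

lemma isBlock_mul_diag {N : ℕ} (s t : Fin N) (M : Matrix (Fin N) (Fin N) ℂ)
    (hM : IsBlock s t M) (d : Fin N → ℂ) (hd : ∀ m, m ≠ s → m ≠ t → d m = 1) :
    IsBlock s t (M * Matrix.diagonal d) := by
  intro a b hab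
  rw [Matrix.mul_diagonal, hM a b hab]
  by_cases h : a = b
  · subst h
    have h1 : a ≠ s := fun hc => hab ⟨Or.inl hc, Or.inl hc⟩
    have h2 : a ≠ t := fun hc => hab ⟨Or.inr hc, Or.inr hc⟩
    rw [Matrix.one_apply_eq, hd a h1 h2, mul_one]
  · rw [Matrix.one_apply_ne h, zero_mul]

lemma isBlock_BmatD {N : ℕ} (s t : Fin N) (R T : ℝ) (τ : Fin N → ℝ) :
    IsBlock s t (Bmat s t R T * DmatST τ s t) := by
  unfold DmatST
  refine isBlock_mul_diag s t _ (isBlock_Bmat s t R T) _ ?_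
  intro m h1 h2
  simp [h1, h2]

/-! ## The matrix `W` of the configuration -/

noncomputable def Dprod {N : ℕ} (c : Config N) : Matrix (Fin N) (Fin N) ℂ :=
  c.De.noncommProd (fun j => 1 - Pmat j) (fun _ _ _ _ _ => commute_oneSubP _ _)

noncomputable def Sprod {N : ℕ} (c : Config N) : Matrix (Fin N) (Fin N) ℂ :=
  c.Sh.noncommProd (fun k => Smat k (c.ω k)) (fun _ _ _ _ _ => commute_diagonal _ _)

noncomputable def Bprod {N : ℕ} (c : Config N) : Matrix (Fin N) (Fin N) ℂ :=
  c.Bs.noncommProd (fun p => Bmat p.1 p.2 (c.R p) (c.T p))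
    (fun p hp q hq hpq => by
      obtain ⟨h1, h2, h3, h4⟩ := c.hBB p hp q hq hpq
      exact commute_of_isBlock (isBlock_Bmat _ _ _ _) (isBlock_Bmat _ _ _ _) h1 h2 h3 h4)

/-- The matrix `W = ∏_{j∈D}(1−P_j) ∏_{k∈S} S_k(ω_k) ∏_{{s,t}∈B} B_st(R_st,T_st)`. -/
noncomputable def Wmat {N : ℕ} (c : Config N) : Matrix (Fin N) (Fin N) ℂ :=
  Dprod c * Sprod c * Bprod c

/-- The vector `W z`. -/
noncomputable def Wvec {N : ℕ} (c : Config N) (z : Fin N → ℂ) : Fin N → ℂ :=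
  (Wmat c).mulVec z

/-- The product `∏_{{s,t}∈B} (B_st(R_st,T_st) Δ^(st)_τ)`. -/
noncomputable def BDprod {N : ℕ} (c : Config N) (τ : Fin N → ℝ) : Matrix (Fin N) (Fin N) ℂ :=
  c.Bs.noncommProd (fun p => Bmat p.1 p.2 (c.R p) (c.T p) * DmatST τ p.1 p.2)
    (fun p hp q hq hpq => by
      obtain ⟨h1, h2, h3, h4⟩ := c.hBB p hp q hq hpq
      exact commute_of_isBlock (isBlock_BmatD _ _ _ _ _) (isBlock_BmatD _ _ _ _ _) h1 h2 h3 h4)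

/-! ## Auxiliary lemmas for the phase-shifter theorem -/

/-- The deterministic map implemented by a single phase shifter in path `j`. -/
noncomputable def shiftMap {N : ℕ} (j : Fin N) (ω : ℝ) : Lam N → Lam N :=
  fun l => (l.1,
    fun m => if m = j then Complex.exp (Complex.I * (ω : ℂ)) * l.2.1 m else l.2.1 m,
    fun m => l.2.2 m / 2)

lemma measurable_shiftMap {N : ℕ} (j : Fin N) (ω : ℝ) : Measurable (shiftMap j ω) := by
  unfold shiftMap
  refine Measurable.prod (by fun_prop) (Measurable.prod ?_ ?_)
  · refine measurable_pi_lambda _ fun m => ?_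
    by_cases hm : m = j
    · simp only [if_pos hm]; fun_prop
    · simp only [if_neg hm]; fun_prop
  · exact measurable_pi_lambda _ fun m => by fun_prop

lemma tmax_half {N : ℕ} [Nonempty (Fin N)] (τ : Fin N → ℝ) :
    tmax (fun m => τ m / 2) = tmax τ / 2 := by
  unfold tmax
  have : ∀ m, τ m / 2 = (2⁻¹ : ℝ) * τ m := fun m => by ring
  simp only [this, ← Real.mul_iSup_of_nonneg (by norm_num : (0:ℝ) ≤ 2⁻¹)]
  ring

lemma noB {N : ℕ} (c : Config N) (hBs : c.Bs = ∅) (m : Fin N) : ¬ inB c m := by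
  simp [inB, hBs]

lemma step_eq_dirac {N : ℕ} (c : Config N) (j : Fin N) (ω : ℝ)
    (hSh : c.Sh = {j}) (hω : c.ω j = ω) (hDe : c.De = ∅) (hBs : c.Bs = ∅) (l : Lam N) :
    step c l = Measure.dirac (shiftMap j ω l) := by
  have hB := noB c hBs
  rw [step]
  simp only [dif_neg (hB l.1)]
  congr 1
  unfold shiftMap
  refine Prod.ext rfl (Prod.ext ?_ ?_)
  · funext m
    simp only [newAmp, hDe, Finset.notMem_empty, if_false, hSh, Finset.mem_singleton,
      dif_neg (hB m)]
    by_cases hm : m = j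
    · subst hm; simp [hω]
    · simp [hm]
  · funext m
    simp only [newTau, hDe, Finset.notMem_empty, if_false, dif_neg (hB m)]

lemma lamSet_subset_preimage {N : ℕ} (j : Fin N) (ω : ℝ) (z : Fin N → ℂ) (i : Fin N) :
    lamSet z i ⊆ shiftMap j ω ⁻¹'
      lamSet (fun m => if m = j then Complex.exp (Complex.I * (ω : ℂ)) * z j else z m) i := by
  rintro ⟨q, u, τ⟩ ⟨hq, hti, htpos, α, hα, heq⟩
  have : Nonempty (Fin N) := ⟨i⟩
  have htm : (tmax fun m => τ m / 2) = tmax τ / 2 := tmax_half τ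
  replace hq : q = i := hq
  replace hti : τ i = tmax τ := hti
  replace htpos : 0 < tmax τ := htpos
  simp only [Set.mem_preimage, lamSet, Set.mem_setOf_eq, shiftMap]
  refine ⟨hq, ?_, ?_, α, hα, ?_⟩
  · rw [htm, hti]
  · rw [htm]; linarith
  · funext m
    have heqm := congrFun heq m
    simp only [deltaVec, Pi.smul_apply, smul_eq_mul] at heqm ⊢
    have hiff : (τ m / 2 = tmax fun m => τ m / 2) ↔ (τ m = tmax τ) := by
      rw [htm]; constructor <;> intro h <;> linarith
    by_cases hmax : τ m = tmax τ
    · rw [if_pos (hiff.mpr hmax)]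
      rw [if_pos hmax] at heqm
      by_cases hm : m = j
      · subst hm; rw [if_pos rfl, if_pos rfl, heqm]; ring
      · rw [if_neg hm, if_neg hm, heqm]
    · rw [if_neg (fun h => hmax (hiff.mp h))]
      rw [if_neg hmax] at heqm
      by_cases hm : m = j
      · subst hm
        have hzm : z m = 0 := (mul_eq_zero.mp heqm.symm).resolve_left hα
        rw [if_pos rfl, hzm, mul_zero, mul_zero]
      · rw [if_neg hm, ← heqm]

/-- Theorem 1, phase-shifter bullet. A single phase shifter `S_j` with
phase `ω` (all other paths free) maps `[z]` into `[z']` with `z'_j = e^{iω} z_j` and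
`z'_m = z_m` otherwise. -/
theorem thm1_phase_shifter {N : ℕ} (c : Config N) (j : Fin N) (ω : ℝ)
    (hSh : c.Sh = {j}) (hω : c.ω j = ω) (hDe : c.De = ∅) (hBs : c.Bs = ∅)
    (hFr : c.Fr = Finset.univ \ {j}) (z : Fin N → ℂ)
    (hz : ∑ i, ‖z i‖ ^ 2 = 1) (p : Measure (Lam N)) (hp : memClass z p) :
    memClass (fun m => if m = j then Complex.exp (Complex.I * (ω : ℂ)) * z j else z m)
      (out c p) := by
  obtain ⟨f, hf, hpeq⟩ := hp
  have hT : Measurable (shiftMap j ω) := measurable_shiftMap j ω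
  have hout : out c p = p.map (shiftMap j ω) := by
    rw [out, funext (step_eq_dirac c j ω hSh hω hDe hBs)]
    exact Measure.bind_dirac_eq_map p hT
  set z' : Fin N → ℂ := fun m =>
    if m = j then Complex.exp (Complex.I * (ω : ℂ)) * z j else z m with hz'
  have habs : ∀ i, ‖z' i‖ = ‖z i‖ := by
    intro i
    by_cases hi : i = j
    · subst hi
      simp only [hz', if_pos rfl, norm_mul, Complex.norm_exp]
      have : (Complex.I * (ω : ℂ)).re = 0 := by simp
      rw [this, Real.exp_zero, one_mul]
    · simp [hz', hi]
  refine ⟨fun i => (f i).map (shiftMap j ω), ?_, ?_⟩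
  · intro i hzi'
    have hzi : z i ≠ 0 := by
      intro h
      apply hzi'
      rw [← norm_eq_zero] at h ⊢
      rw [habs, h]
    obtain ⟨hprob, hone⟩ := hf i hzi
    have hprob' : IsProbabilityMeasure ((f i).map (shiftMap j ω)) :=
      Measure.isProbabilityMeasure_map hT.aemeasurable
    refine ⟨hprob', le_antisymm prob_le_one ?_⟩
    calc (1 : ENNReal) = (f i) (lamSet z i) := hone.symm
      _ ≤ (f i) (shiftMap j ω ⁻¹' lamSet z' i) :=
          measure_mono (lamSet_subset_preimage j ω z i)
      _ ≤ (f i).map (shiftMap j ω) (lamSet z' i) :=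
          Measure.le_map_apply hT.aemeasurable _
  · rw [hout, hpeq]
    have hmap : ∀ μ : Measure (Lam N), μ.map (shiftMap j ω) = Measure.mapₗ (shiftMap j ω) μ :=
      fun μ => (Measure.mapₗ_apply_of_measurable hT μ).symm
    rw [hmap, map_sum]
    refine Finset.sum_congr rfl fun i _ => ?_
    simp only [← hmap, habs]
    exact Measure.map_smul (R := ENNReal) _ _ _

end SPI
end

section
/- (Theorem 1, beam-splitter bullet.) Consider the parallel gate configuration with a single beam splitter on paths s ≠ t with constants R, T ≥ 0, R + T = 1 (B = {{s,t}}), all other paths free (F = {1,…,N}∖{s,t}), and no detectors or phase shifters (D = ∅, S = ∅). Let z ∈ ℂ^N be a unit vector and p ∈ [z]. Then the output measure pK belongs to [B_st(R,T) z]. -/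
open MeasureTheory
open scoped Classical

namespace SPI

/-! ### Auxiliary machinery for Theorem 1 (beam splitter) -/

noncomputable def thetaST {N : ℕ} (s t : Fin N) (τ : Fin N → ℝ) : Fin N → ℝ :=
  fun m => if m = s ∨ m = t then max (τ s) (τ t) / 2 else τ m / 2

noncomputable def ampST {N : ℕ} (s t : Fin N) (R T : ℝ) (u : Fin N → ℂ) (τ : Fin N → ℝ) :
    Fin N → ℂ :=
  fun m =>
    if m = s then
      Complex.I * (Real.sqrt R : ℂ) * (if τ s = max (τ s) (τ t) then u s else 0)
        + (Real.sqrt T : ℂ) * (if τ t = max (τ s) (τ t) then u t else 0)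
    else if m = t then
      (Real.sqrt T : ℂ) * (if τ s = max (τ s) (τ t) then u s else 0)
        + Complex.I * (Real.sqrt R : ℂ) * (if τ t = max (τ s) (τ t) then u t else 0)
    else u m

noncomputable def gMap {N : ℕ} (s t : Fin N) (R T : ℝ) (j : Fin N) (l : Lam N) : Lam N :=
  (j, ampST s t R T l.2.1 l.2.2, thetaST s t l.2.2)

lemma le_tmax {N : ℕ} (τ : Fin N → ℝ) (j : Fin N) : τ j ≤ tmax τ :=
  le_ciSup (Set.finite_range τ).bddAbove j

lemma tmax_le {N : ℕ} [Nonempty (Fin N)] {τ : Fin N → ℝ} {M : ℝ}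
    (h : ∀ j, τ j ≤ M) : tmax τ ≤ M := ciSup_le h

lemma inB_iff {N : ℕ} (c : Config N) (s t : Fin N) (hBs : c.Bs = {(s, t)}) (m : Fin N) :
    inB c m ↔ (m = s ∨ m = t) := by
  constructor
  · rintro ⟨pr, hpr, h⟩
    rw [hBs, Finset.mem_singleton] at hpr
    subst hpr
    exact h
  · intro h
    exact ⟨(s, t), by rw [hBs]; exact Finset.mem_singleton_self _, h⟩

lemma choose_eq {N : ℕ} (c : Config N) (s t : Fin N) (hBs : c.Bs = {(s, t)}) {m : Fin N}
    (hm : inB c m) : hm.choose = (s, t) := by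
  have h := hm.choose_spec.1
  exact Finset.mem_singleton.mp (by rw [← hBs]; exact h)

lemma newTau_eq {N : ℕ} (c : Config N) (s t : Fin N) (hBs : c.Bs = {(s, t)})
    (hDe : c.De = ∅) (q : Fin N) (τ : Fin N → ℝ) :
    newTau c q τ = thetaST s t τ := by
  funext m
  unfold newTau thetaST
  rw [hDe]
  simp only [Finset.notMem_empty, if_false]
  by_cases hm : m = s ∨ m = t
  · rw [dif_pos ((inB_iff c s t hBs m).mpr hm), if_pos hm, choose_eq c s t hBs]
  · rw [dif_neg (fun h => hm ((inB_iff c s t hBs m).mp h)), if_neg hm]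

lemma newAmp_eq {N : ℕ} (c : Config N) (s t : Fin N) (hstne : s ≠ t) (R T : ℝ)
    (hBs : c.Bs = {(s, t)}) (hRc : c.R (s, t) = R) (hTc : c.T (s, t) = T)
    (hDe : c.De = ∅) (hSh : c.Sh = ∅) (q : Fin N) (u : Fin N → ℂ) (τ : Fin N → ℝ) :
    newAmp c q u τ = ampST s t R T u τ := by
  funext m
  unfold newAmp ampST
  rw [hDe, hSh]
  simp only [Finset.notMem_empty, if_false]
  by_cases hm : m = s ∨ m = t
  · rw [dif_pos ((inB_iff c s t hBs m).mpr hm)]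
    simp only [choose_eq c s t hBs]
    rcases hm with rfl | rfl
    · simp [hRc, hTc]
    · simp [hRc, hTc, Ne.symm hstne]
  · push_neg at hm
    rw [dif_neg (fun h => by
      rcases (inB_iff c s t hBs m).mp h with h' | h'
      exacts [hm.1 h', hm.2 h'])]
    rw [if_neg hm.1, if_neg hm.2]

lemma step_eq_notin {N : ℕ} (c : Config N) (s t : Fin N) (hstne : s ≠ t) (R T : ℝ)
    (hBs : c.Bs = {(s, t)}) (hRc : c.R (s, t) = R) (hTc : c.T (s, t) = T)
    (hDe : c.De = ∅) (hSh : c.Sh = ∅) (l : Lam N) (hq : ¬(l.1 = s ∨ l.1 = t)) :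
    step c l = Measure.dirac (gMap s t R T l.1 l) := by
  have h : ¬ inB c l.1 := fun h => hq ((inB_iff c s t hBs l.1).mp h)
  simp only [step]
  rw [dif_neg h, newAmp_eq c s t hstne R T hBs hRc hTc hDe hSh,
    newTau_eq c s t hBs hDe]
  rfl

lemma step_eq_in {N : ℕ} (c : Config N) (s t : Fin N) (hstne : s ≠ t) (R T : ℝ)
    (hBs : c.Bs = {(s, t)}) (hRc : c.R (s, t) = R) (hTc : c.T (s, t) = T)
    (hDe : c.De = ∅) (hSh : c.Sh = ∅) (l : Lam N) (hq : l.1 = s ∨ l.1 = t)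
    (hab : ‖ampST s t R T l.2.1 l.2.2 s‖ ^ 2
        + ‖ampST s t R T l.2.1 l.2.2 t‖ ^ 2 ≠ 0) :
    step c l =
      ENNReal.ofReal (‖ampST s t R T l.2.1 l.2.2 s‖ ^ 2
          / (‖ampST s t R T l.2.1 l.2.2 s‖ ^ 2
            + ‖ampST s t R T l.2.1 l.2.2 t‖ ^ 2))
        • Measure.dirac (gMap s t R T s l)
      + ENNReal.ofReal (‖ampST s t R T l.2.1 l.2.2 t‖ ^ 2
          / (‖ampST s t R T l.2.1 l.2.2 s‖ ^ 2
            + ‖ampST s t R T l.2.1 l.2.2 t‖ ^ 2))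
        • Measure.dirac (gMap s t R T t l) := by
  have h : inB c l.1 := (inB_iff c s t hBs l.1).mpr hq
  simp only [step]
  rw [dif_pos h]
  simp only [choose_eq c s t hBs, newAmp_eq c s t hstne R T hBs hRc hTc hDe hSh,
    newTau_eq c s t hBs hDe]
  rw [if_neg hab]
  rfl

lemma propto_iff {N : ℕ} (v w : Fin N → ℂ) :
    Propto v w ↔ ((v = 0 ↔ w = 0) ∧ ∀ a b, v a * w b = v b * w a) := by
  constructor
  · rintro ⟨α, hα, rfl⟩
    constructor
    · rw [smul_eq_zero]
      constructor
      · rintro (h | h)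
        · exact absurd h hα
        · exact h
      · intro h; exact Or.inr h
    · intro a b
      simp only [Pi.smul_apply, smul_eq_mul]
      ring
  · rintro ⟨hiff, hprop⟩
    by_cases hw : w = 0
    · exact ⟨1, one_ne_zero, by rw [hiff.mpr hw, hw]; simp⟩
    · obtain ⟨j0, hj0⟩ := Function.ne_iff.mp hw
      simp only [Pi.zero_apply] at hj0
      have hv : v ≠ 0 := fun h => hw (hiff.mp h)
      obtain ⟨m, hm⟩ := Function.ne_iff.mp hv
      simp only [Pi.zero_apply] at hm
      have hvj0 : v j0 ≠ 0 := by
        intro h0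
        have := hprop m j0
        rw [h0, zero_mul] at this
        exact (mul_ne_zero hm hj0) this
      refine ⟨v j0 / w j0, div_ne_zero hvj0 hj0, funext fun b => ?_⟩
      simp only [Pi.smul_apply, smul_eq_mul]
      field_simp
      exact hprop b j0

lemma mulVec_Bmat_s {N : ℕ} (s t : Fin N) (hstne : s ≠ t) (R T : ℝ) (z : Fin N → ℂ) :
    (Bmat s t R T).mulVec z s
      = Complex.I * (Real.sqrt R : ℂ) * z s + (Real.sqrt T : ℂ) * z t := by
  have hB : ∀ b : Fin N, Bmat s t R T s b
      = (if b = s then Complex.I * (Real.sqrt R : ℂ) else 0)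
        + (if b = t then (Real.sqrt T : ℂ) else 0) := by
    intro b
    by_cases hbs : b = s
    · subst hbs; simp [Bmat, hstne]
    · by_cases hbt : b = t
      · subst hbt; simp [Bmat, hbs]
      · simp [Bmat, hbs, hbt]
  have h0 : (Bmat s t R T).mulVec z s = ∑ b, Bmat s t R T s b * z b := rfl
  rw [h0]
  simp_rw [hB, add_mul, ite_mul, zero_mul]
  rw [Finset.sum_add_distrib, Finset.sum_ite_eq' Finset.univ s, Finset.sum_ite_eq' Finset.univ t]
  simp

lemma mulVec_Bmat_t {N : ℕ} (s t : Fin N) (hstne : s ≠ t) (R T : ℝ) (z : Fin N → ℂ) :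
    (Bmat s t R T).mulVec z t
      = (Real.sqrt T : ℂ) * z s + Complex.I * (Real.sqrt R : ℂ) * z t := by
  have hB : ∀ b : Fin N, Bmat s t R T t b
      = (if b = s then (Real.sqrt T : ℂ) else 0)
        + (if b = t then Complex.I * (Real.sqrt R : ℂ) else 0) := by
    intro b
    by_cases hbs : b = s
    · subst hbs; simp [Bmat, hstne, Ne.symm hstne]
    · by_cases hbt : b = t
      · subst hbt; simp [Bmat, hbs, Ne.symm hstne]
      · simp [Bmat, hbs, hbt, Ne.symm hstne]
  have h0 : (Bmat s t R T).mulVec z t = ∑ b, Bmat s t R T t b * z b := rfl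
  rw [h0]
  simp_rw [hB, add_mul, ite_mul, zero_mul]
  rw [Finset.sum_add_distrib, Finset.sum_ite_eq' Finset.univ s, Finset.sum_ite_eq' Finset.univ t]
  simp

lemma mulVec_Bmat_ne {N : ℕ} (s t : Fin N) (R T : ℝ) (z : Fin N → ℂ) (m : Fin N)
    (hms : m ≠ s) (hmt : m ≠ t) : (Bmat s t R T).mulVec z m = z m := by
  have hB : ∀ b : Fin N, Bmat s t R T m b * z b = if b = m then z m else 0 := by
    intro b
    by_cases hb : b = m
    · subst hb; simp [Bmat, hms, hmt]
    · have hmb : m ≠ b := fun h => hb h.symm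
      simp [Bmat, hms, hmt, hmb, hb]
  have h0 : (Bmat s t R T).mulVec z m = ∑ b, Bmat s t R T m b * z b := rfl
  rw [h0]
  simp_rw [hB]
  rw [Finset.sum_ite_eq' Finset.univ m]
  simp

lemma bst_norm (R T : ℝ) (hR : 0 ≤ R) (hT : 0 ≤ T) (zs zt : ℂ) :
    ‖Complex.I * (Real.sqrt R : ℂ) * zs + (Real.sqrt T : ℂ) * zt‖ ^ 2
      + ‖(Real.sqrt T : ℂ) * zs + Complex.I * (Real.sqrt R : ℂ) * zt‖ ^ 2
      = (R + T) * (‖zs‖ ^ 2 + ‖zt‖ ^ 2) := by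
  obtain ⟨a, ha, rfl⟩ : ∃ a, 0 ≤ a ∧ a ^ 2 = R := ⟨Real.sqrt R, Real.sqrt_nonneg R, Real.sq_sqrt hR⟩
  obtain ⟨b, hb, rfl⟩ : ∃ b, 0 ≤ b ∧ b ^ 2 = T := ⟨Real.sqrt T, Real.sqrt_nonneg T, Real.sq_sqrt hT⟩
  rw [Real.sqrt_sq ha, Real.sqrt_sq hb]
  simp only [Complex.sq_norm, Complex.normSq_apply, Complex.add_re, Complex.add_im,
    Complex.mul_re, Complex.mul_im, Complex.I_re, Complex.I_im, Complex.ofReal_re,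
    Complex.ofReal_im]
  ring

/-- The key pointwise lemma: the beam splitter maps ontic states supporting `z`
to ontic states supporting `B z`. -/
lemma key {N : ℕ} (s t : Fin N) (hstne : s ≠ t) (R T : ℝ) (z : Fin N → ℂ) (i : Fin N)
    (l : Lam N) (hl : l ∈ lamSet z i) :
    ∃ α : ℂ, α ≠ 0 ∧
      0 < tmax (thetaST s t l.2.2) ∧
      deltaVec (thetaST s t l.2.2) (ampST s t R T l.2.1 l.2.2)
        = α • (Bmat s t R T).mulVec z ∧
      ((i = s ∨ i = t) → (thetaST s t l.2.2 s = tmax (thetaST s t l.2.2)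
          ∧ thetaST s t l.2.2 t = tmax (thetaST s t l.2.2))) ∧
      (¬(i = s ∨ i = t) → thetaST s t l.2.2 i = tmax (thetaST s t l.2.2)) := by
  obtain ⟨hq, hτi, hpos, α, hα, hD⟩ := hl
  haveI : Nonempty (Fin N) := ⟨i⟩
  set τ := l.2.2 with hτdef
  set u := l.2.1 with hudef
  set M := tmax τ with hM
  set τ2 := thetaST s t τ with hτ2
  set u2 := ampST s t R T u τ with hu2
  have F0 : ∀ m, τ m ≤ M := fun m => le_tmax τ m
  have F1 : max (τ s) (τ t) ≤ M := max_le (F0 s) (F0 t)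
  have F2 : ∀ m, τ2 m ≤ M / 2 := by
    intro m
    rw [hτ2]
    unfold thetaST
    by_cases hm : m = s ∨ m = t
    · rw [if_pos hm]; linarith
    · rw [if_neg hm]; have := F0 m; linarith
  have hmaxst : (i = s ∨ i = t) → max (τ s) (τ t) = M := by
    rintro (rfl | rfl)
    · exact le_antisymm F1 (hτi ▸ le_max_left _ _)
    · exact le_antisymm F1 (hτi ▸ le_max_right _ _)
  have F3 : ∃ m, τ2 m = M / 2 := by
    by_cases hi : i = s ∨ i = t
    · refine ⟨s, ?_⟩
      rw [hτ2]
      unfold thetaST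
      rw [if_pos (Or.inl rfl), hmaxst hi]
    · refine ⟨i, ?_⟩
      rw [hτ2]
      unfold thetaST
      rw [if_neg hi, hτi]
  have F4 : tmax τ2 = M / 2 := by
    obtain ⟨m, hm⟩ := F3
    exact le_antisymm (tmax_le F2) (hm ▸ le_tmax τ2 m)
  have F5 : 0 < tmax τ2 := by rw [F4]; linarith
  have F6 : ∀ m, ¬(m = s ∨ m = t) → (τ2 m = tmax τ2 ↔ τ m = M) := by
    intro m hm
    rw [F4, hτ2]
    unfold thetaST
    rw [if_neg hm]
    constructor <;> intro h <;> linarith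
  have F6' : ∀ m, (m = s ∨ m = t) → (τ2 m = tmax τ2 ↔ max (τ s) (τ t) = M) := by
    intro m hm
    rw [F4, hτ2]
    unfold thetaST
    rw [if_pos hm]
    constructor <;> intro h <;> linarith
  have F7 : ∀ m, τ m ≠ M → z m = 0 := by
    intro m hmne
    have := congrFun hD m
    unfold deltaVec at this
    rw [if_neg (by rw [← hM]; exact hmne)] at this
    simp only [Pi.smul_apply, smul_eq_mul] at this
    rcases mul_eq_zero.mp this.symm with h | h
    · exact absurd h hα
    · exact h
  -- the deltaVec identity
  have F8 : deltaVec τ2 u2 = α • (Bmat s t R T).mulVec z := by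
    funext m
    unfold deltaVec
    simp only [Pi.smul_apply, smul_eq_mul]
    by_cases hm : m = s ∨ m = t
    · by_cases hMax : max (τ s) (τ t) = M
      · rw [if_pos ((F6' m hm).mpr hMax)]
        have hus : (if τ s = max (τ s) (τ t) then u s else 0) = α * z s := by
          rw [hMax]
          have := congrFun hD s
          unfold deltaVec at this
          rw [← hM] at this
          simpa using this
        have hut : (if τ t = max (τ s) (τ t) then u t else 0) = α * z t := by
          rw [hMax]
          have := congrFun hD t
          unfold deltaVec at this
          rw [← hM] at this
          simpa using this
        rcases hm with rfl | rfl
        · rw [hu2]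
          unfold ampST
          rw [if_pos rfl, hus, hut, mulVec_Bmat_s _ _ hstne R T z]
          ring
        · rw [hu2]
          unfold ampST
          rw [if_neg (Ne.symm hstne), if_pos rfl, hus, hut, mulVec_Bmat_t _ _ hstne R T z]
          ring
      · rw [if_neg (fun h => hMax ((F6' m hm).mp h))]
        have hzs : z s = 0 := F7 s (fun h => hMax (le_antisymm F1 (h ▸ le_max_left _ _)))
        have hzt : z t = 0 := F7 t (fun h => hMax (le_antisymm F1 (h ▸ le_max_right _ _)))
        rcases hm with rfl | rfl
        · rw [mulVec_Bmat_s _ _ hstne R T z, hzs, hzt]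
          ring
        · rw [mulVec_Bmat_t _ _ hstne R T z, hzs, hzt]
          ring
    · push_neg at hm
      have hm' : ¬(m = s ∨ m = t) := fun h => by
        rcases h with h | h
        exacts [hm.1 h, hm.2 h]
      rw [mulVec_Bmat_ne s t R T z m hm.1 hm.2]
      by_cases hτm : τ m = M
      · rw [if_pos ((F6 m hm').mpr hτm)]
        rw [hu2]
        unfold ampST
        rw [if_neg hm.1, if_neg hm.2]
        have := congrFun hD m
        unfold deltaVec at this
        rw [← hM, if_pos hτm] at this
        simpa using this
      · rw [if_neg (fun h => hτm ((F6 m hm').mp h)), F7 m hτm]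
        ring
  refine ⟨α, hα, F5, F8, fun hi => ⟨?_, ?_⟩, fun hi => ?_⟩
  · exact (F6' s (Or.inl rfl)).mpr (hmaxst hi)
  · exact (F6' t (Or.inr rfl)).mpr (hmaxst hi)
  · exact (F6 i hi).mpr hτi

lemma gMap_mem_notin {N : ℕ} (s t : Fin N) (hstne : s ≠ t) (R T : ℝ) (z : Fin N → ℂ)
    (i : Fin N) (hi : ¬(i = s ∨ i = t)) (l : Lam N) (hl : l ∈ lamSet z i) :
    gMap s t R T i l ∈ lamSet ((Bmat s t R T).mulVec z) i := by
  obtain ⟨α, hα, hpos, hdelta, _, hii⟩ := key s t hstne R T z i l hl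
  exact ⟨rfl, hii hi, hpos, α, hα, hdelta⟩

lemma gMap_mem_in {N : ℕ} (s t : Fin N) (hstne : s ≠ t) (R T : ℝ) (z : Fin N → ℂ)
    (i : Fin N) (hi : i = s ∨ i = t) (l : Lam N) (hl : l ∈ lamSet z i) :
    gMap s t R T s l ∈ lamSet ((Bmat s t R T).mulVec z) s
      ∧ gMap s t R T t l ∈ lamSet ((Bmat s t R T).mulVec z) t := by
  obtain ⟨α, hα, hpos, hdelta, hst, _⟩ := key s t hstne R T z i l hl
  exact ⟨⟨rfl, (hst hi).1, hpos, α, hα, hdelta⟩, ⟨rfl, (hst hi).2, hpos, α, hα, hdelta⟩⟩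

lemma ratio_lemma {N : ℕ} (s t : Fin N) (hstne : s ≠ t) (R T : ℝ) (z : Fin N → ℂ)
    (i : Fin N) (hi : i = s ∨ i = t) (hzi : z i ≠ 0) (l : Lam N) (hl : l ∈ lamSet z i)
    (hWpos : 0 < ‖(Bmat s t R T).mulVec z s‖ ^ 2
        + ‖(Bmat s t R T).mulVec z t‖ ^ 2) :
    ‖ampST s t R T l.2.1 l.2.2 s‖ ^ 2
        + ‖ampST s t R T l.2.1 l.2.2 t‖ ^ 2 ≠ 0
    ∧ ‖ampST s t R T l.2.1 l.2.2 s‖ ^ 2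
        / (‖ampST s t R T l.2.1 l.2.2 s‖ ^ 2
          + ‖ampST s t R T l.2.1 l.2.2 t‖ ^ 2)
      = ‖(Bmat s t R T).mulVec z s‖ ^ 2
        / (‖(Bmat s t R T).mulVec z s‖ ^ 2
          + ‖(Bmat s t R T).mulVec z t‖ ^ 2)
    ∧ ‖ampST s t R T l.2.1 l.2.2 t‖ ^ 2
        / (‖ampST s t R T l.2.1 l.2.2 s‖ ^ 2
          + ‖ampST s t R T l.2.1 l.2.2 t‖ ^ 2)
      = ‖(Bmat s t R T).mulVec z t‖ ^ 2
        / (‖(Bmat s t R T).mulVec z s‖ ^ 2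
          + ‖(Bmat s t R T).mulVec z t‖ ^ 2) := by
  obtain ⟨α, hα, hpos, hdelta, hst, _⟩ := key s t hstne R T z i l hl
  set z' := (Bmat s t R T).mulVec z with hz'
  have hus : ampST s t R T l.2.1 l.2.2 s = α * z' s := by
    have := congrFun hdelta s
    unfold deltaVec at this
    rw [if_pos (hst hi).1] at this
    simpa using this
  have hut : ampST s t R T l.2.1 l.2.2 t = α * z' t := by
    have := congrFun hdelta t
    unfold deltaVec at this
    rw [if_pos (hst hi).2] at this
    simpa using this
  have hk : (0 : ℝ) < ‖α‖ ^ 2 := pow_pos (norm_pos_iff.mpr hα) 2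
  have ha : ‖ampST s t R T l.2.1 l.2.2 s‖ ^ 2
      = ‖α‖ ^ 2 * ‖z' s‖ ^ 2 := by
    rw [hus, norm_mul, mul_pow]
  have hb : ‖ampST s t R T l.2.1 l.2.2 t‖ ^ 2
      = ‖α‖ ^ 2 * ‖z' t‖ ^ 2 := by
    rw [hut, norm_mul, mul_pow]
  refine ⟨?_, ?_, ?_⟩
  · rw [ha, hb, ← mul_add]
    exact ne_of_gt (mul_pos hk hWpos)
  · rw [ha, hb, ← mul_add, mul_div_mul_left _ _ (ne_of_gt hk)]
  · rw [ha, hb, ← mul_add, mul_div_mul_left _ _ (ne_of_gt hk)]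

/-! ### Measurability lemmas -/

lemma meas_tau {N : ℕ} (j : Fin N) : Measurable fun l : Lam N => l.2.2 j :=
  (measurable_pi_apply j).comp (measurable_snd.comp measurable_snd)

lemma meas_u {N : ℕ} (j : Fin N) : Measurable fun l : Lam N => l.2.1 j :=
  (measurable_pi_apply j).comp (measurable_fst.comp measurable_snd)

lemma meas_thetaST {N : ℕ} (s t : Fin N) :
    Measurable fun l : Lam N => thetaST s t l.2.2 := by
  apply measurable_pi_lambda
  intro m
  unfold thetaST
  by_cases hm : m = s ∨ m = t
  · simp only [if_pos hm]
    exact ((meas_tau s).max (meas_tau t)).div_const 2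
  · simp only [if_neg hm]
    exact (meas_tau m).div_const 2

lemma meas_sel_s {N : ℕ} (s t : Fin N) :
    Measurable fun l : Lam N =>
      (if l.2.2 s = max (l.2.2 s) (l.2.2 t) then l.2.1 s else 0 : ℂ) :=
  Measurable.ite (measurableSet_eq_fun (meas_tau s) ((meas_tau s).max (meas_tau t)))
    (meas_u s) measurable_const

lemma meas_sel_t {N : ℕ} (s t : Fin N) :
    Measurable fun l : Lam N =>
      (if l.2.2 t = max (l.2.2 s) (l.2.2 t) then l.2.1 t else 0 : ℂ) :=
  Measurable.ite (measurableSet_eq_fun (meas_tau t) ((meas_tau s).max (meas_tau t)))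
    (meas_u t) measurable_const

lemma meas_ampST {N : ℕ} (s t : Fin N) (R T : ℝ) :
    Measurable fun l : Lam N => ampST s t R T l.2.1 l.2.2 := by
  apply measurable_pi_lambda
  intro m
  unfold ampST
  by_cases hms : m = s
  · simp only [if_pos hms]
    exact (((meas_sel_s s t).const_mul _).add ((meas_sel_t s t).const_mul _))
  · simp only [if_neg hms]
    by_cases hmt : m = t
    · simp only [if_pos hmt]
      exact (((meas_sel_s s t).const_mul _).add ((meas_sel_t s t).const_mul _))
    · simp only [if_neg hmt]
      exact meas_u m

lemma meas_gMap {N : ℕ} (s t : Fin N) (R T : ℝ) (j : Fin N) :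
    Measurable (gMap s t R T j) :=
  measurable_const.prodMk ((meas_ampST s t R T).prodMk (meas_thetaST s t))

lemma meas_gMapQ {N : ℕ} (s t : Fin N) (R T : ℝ) :
    Measurable fun l : Lam N => gMap s t R T l.1 l :=
  measurable_fst.prodMk ((meas_ampST s t R T).prodMk (meas_thetaST s t))

lemma meas_tmax {N : ℕ} : Measurable fun τ : Fin N → ℝ => tmax τ := by
  unfold tmax
  exact Measurable.iSup fun j => measurable_pi_apply j

lemma meas_deltaVec {N : ℕ} :
    Measurable fun l : Lam N => deltaVec l.2.2 l.2.1 := by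
  apply measurable_pi_lambda
  intro j
  unfold deltaVec
  exact Measurable.ite
    (measurableSet_eq_fun (meas_tau j) (meas_tmax.comp (measurable_snd.comp measurable_snd)))
    (meas_u j) measurable_const

lemma measurable_lamSet {N : ℕ} (z : Fin N → ℂ) (i : Fin N) :
    MeasurableSet (lamSet z i) := by
  have h1 : MeasurableSet {l : Lam N | l.1 = i} :=
    measurable_fst (measurableSet_singleton i)
  have h2 : MeasurableSet {l : Lam N | l.2.2 i = tmax l.2.2} :=
    measurableSet_eq_fun (meas_tau i) (meas_tmax.comp (measurable_snd.comp measurable_snd))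
  have h3 : MeasurableSet {l : Lam N | 0 < tmax l.2.2} :=
    (meas_tmax.comp (measurable_snd.comp measurable_snd)) measurableSet_Ioi
  have h4 : MeasurableSet {l : Lam N | Propto (deltaVec l.2.2 l.2.1) z} := by
    have heq : {l : Lam N | Propto (deltaVec l.2.2 l.2.1) z}
        = {l : Lam N | (deltaVec l.2.2 l.2.1 = 0 ↔ z = 0)}
          ∩ ⋂ (a : Fin N) (b : Fin N),
              {l : Lam N | deltaVec l.2.2 l.2.1 a * z b = deltaVec l.2.2 l.2.1 b * z a} := by
      ext l
      simp only [Set.mem_setOf_eq, Set.mem_inter_iff, Set.mem_iInter, propto_iff]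
    rw [heq]
    apply MeasurableSet.inter
    · by_cases hz : z = 0
      · have : {l : Lam N | (deltaVec l.2.2 l.2.1 = 0 ↔ z = 0)}
            = {l : Lam N | deltaVec l.2.2 l.2.1 = 0} := by
          ext l; simp [hz]
        rw [this]
        exact meas_deltaVec (measurableSet_singleton 0)
      · have : {l : Lam N | (deltaVec l.2.2 l.2.1 = 0 ↔ z = 0)}
            = {l : Lam N | deltaVec l.2.2 l.2.1 = 0}ᶜ := by
          ext l
          simp only [Set.mem_setOf_eq, Set.mem_compl_iff]
          constructor
          · intro h h0; exact hz (h.mp h0)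
          · intro h; exact ⟨fun h0 => absurd h0 h, fun h0 => absurd h0 hz⟩
        rw [this]
        exact (meas_deltaVec (measurableSet_singleton 0)).compl
    · apply MeasurableSet.iInter
      intro a
      apply MeasurableSet.iInter
      intro b
      exact measurableSet_eq_fun
        ((((measurable_pi_apply a).comp meas_deltaVec)).mul_const (z b))
        ((((measurable_pi_apply b).comp meas_deltaVec)).mul_const (z a))
  have : lamSet z i = ({l : Lam N | l.1 = i} ∩ {l : Lam N | l.2.2 i = tmax l.2.2})
      ∩ ({l : Lam N | 0 < tmax l.2.2} ∩ {l : Lam N | Propto (deltaVec l.2.2 l.2.1) z}) := by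
    ext l
    simp only [lamSet, Set.mem_setOf_eq, Set.mem_inter_iff]
    tauto
  rw [this]
  exact ((h1.inter h2).inter (h3.inter h4))

lemma dirac_comp_apply {α : Type*} [MeasurableSpace α] {g : α → α} {A : Set α}
    (hA : MeasurableSet A) (a : α) :
    Measure.dirac (g a) A = (g ⁻¹' A).indicator 1 a := by
  rw [Measure.dirac_apply' _ hA]
  by_cases h : g a ∈ A
  · rw [Set.indicator_of_mem h]
    exact (Set.indicator_of_mem h 1).symm
  · rw [Set.indicator_of_notMem h]
    exact (Set.indicator_of_notMem h 1).symm

lemma lintegral_dirac_comp {α : Type*} [MeasurableSpace α] {g : α → α} (hg : Measurable g)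
    (μ : Measure α) {A : Set α} (hA : MeasurableSet A) :
    ∫⁻ a, Measure.dirac (g a) A ∂μ = μ.map g A := by
  rw [Measure.map_apply hg hA]
  simp_rw [dirac_comp_apply hA]
  exact lintegral_indicator_one (hg hA)

lemma lintegral_two_dirac {α : Type*} [MeasurableSpace α] {g1 g2 : α → α}
    (hg1 : Measurable g1) (hg2 : Measurable g2) (c1 c2 : ENNReal) (μ : Measure α)
    {A : Set α} (hA : MeasurableSet A) :
    ∫⁻ a, (c1 • Measure.dirac (g1 a) + c2 • Measure.dirac (g2 a) : Measure α) A ∂μ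
      = c1 * μ.map g1 A + c2 * μ.map g2 A := by
  simp only [Measure.add_apply, Measure.smul_apply, smul_eq_mul]
  have hm1 : Measurable fun a => Measure.dirac (g1 a) A := by
    simp_rw [dirac_comp_apply hA]
    exact measurable_one.indicator (hg1 hA)
  rw [lintegral_add_left (hm1.const_mul c1), lintegral_const_mul _ hm1]
  have hm2 : Measurable fun a => Measure.dirac (g2 a) A := by
    simp_rw [dirac_comp_apply hA]
    exact measurable_one.indicator (hg2 hA)
  rw [lintegral_const_mul _ hm2, lintegral_dirac_comp hg1 μ hA, lintegral_dirac_comp hg2 μ hA]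

/-- Theorem 1, beam-splitter bullet. A single beam splitter `B_st(R,T)`
(all other paths free) maps `[z]` into `[B_st(R,T) z]`. -/
theorem thm1_beam_splitter {N : ℕ} (c : Config N) (s t : Fin N) (hstne : s ≠ t)
    (R T : ℝ) (hR : 0 ≤ R) (hT : 0 ≤ T) (hRT : R + T = 1)
    (hBs : c.Bs = {(s, t)}) (hRc : c.R (s, t) = R) (hTc : c.T (s, t) = T)
    (hDe : c.De = ∅) (hSh : c.Sh = ∅) (hFr : c.Fr = Finset.univ \ {s, t})
    (z : Fin N → ℂ) (hz : ∑ i, ‖z i‖ ^ 2 = 1)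
    (p : Measure (Lam N)) (hp : memClass z p) :
    memClass ((Bmat s t R T).mulVec z) (out c p) := by
  classical
  obtain ⟨f, hf, hpsum⟩ := hp
  set z' : Fin N → ℂ := (Bmat s t R T).mulVec z with hz'def
  have hz's : z' s = Complex.I * (Real.sqrt R : ℂ) * z s + (Real.sqrt T : ℂ) * z t :=
    mulVec_Bmat_s s t hstne R T z
  have hz't : z' t = (Real.sqrt T : ℂ) * z s + Complex.I * (Real.sqrt R : ℂ) * z t :=
    mulVec_Bmat_t s t hstne R T z
  have hz'ne : ∀ m, m ≠ s → m ≠ t → z' m = z m := fun m h1 h2 =>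
    mulVec_Bmat_ne s t R T z m h1 h2
  set W : ℝ := ‖z s‖ ^ 2 + ‖z t‖ ^ 2 with hWdef
  have hW0 : 0 ≤ W := by rw [hWdef]; positivity
  have hW' : ‖z' s‖ ^ 2 + ‖z' t‖ ^ 2 = W := by
    rw [hz's, hz't, bst_norm R T hR hT (z s) (z t), hRT, one_mul]
  set cs : ENNReal := ENNReal.ofReal (‖z' s‖ ^ 2 / W) with hcs
  set ct : ENNReal := ENNReal.ofReal (‖z' t‖ ^ 2 / W) with hct
  set cs' : ENNReal := ENNReal.ofReal (‖z s‖ ^ 2 / W) with hcs'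
  set ct' : ENNReal := ENNReal.ofReal (‖z t‖ ^ 2 / W) with hct'
  have hfprob : ∀ i, z i ≠ 0 → IsProbabilityMeasure (f i) := fun i hi => (hf i hi).1
  have hfconc : ∀ i, z i ≠ 0 → f i (lamSet z i) = 1 := fun i hi => (hf i hi).2
  -- the measurable kernel G
  set G : Lam N → Measure (Lam N) := fun l =>
    if l.1 = s ∨ l.1 = t then
      cs • Measure.dirac (gMap s t R T s l) + ct • Measure.dirac (gMap s t R T t l)
    else Measure.dirac (gMap s t R T l.1 l) with hGdef
  have hcond : MeasurableSet {l : Lam N | l.1 = s ∨ l.1 = t} := by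
    have h : {l : Lam N | l.1 = s ∨ l.1 = t} = Prod.fst ⁻¹' ({s} ∪ {t}) := by
      ext l
      simp only [Set.mem_setOf_eq, Set.mem_preimage, Set.mem_union, Set.mem_singleton_iff]
    rw [h]
    exact measurable_fst ((measurableSet_singleton s).union (measurableSet_singleton t))
  have hGmeas : Measurable G := by
    rw [hGdef]
    apply Measurable.ite hcond
    · apply Measure.measurable_of_measurable_coe
      intro A hA
      simp only [Measure.add_apply, Measure.smul_apply, smul_eq_mul]
      simp_rw [dirac_comp_apply hA]
      exact ((measurable_one.indicator ((meas_gMap s t R T s) hA)).const_mul cs).add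
        ((measurable_one.indicator ((meas_gMap s t R T t) hA)).const_mul ct)
    · exact Measure.measurable_dirac.comp (meas_gMapQ s t R T)
  -- step agrees with G on the relevant set
  set S : Set (Lam N) := ⋃ (i : Fin N) (_ : z i ≠ 0), lamSet z i with hSdef
  have hstepG : ∀ l ∈ S, step c l = G l := by
    intro l hl
    rw [hSdef] at hl
    simp only [Set.mem_iUnion] at hl
    obtain ⟨i, hzi, hli⟩ := hl
    by_cases hi : i = s ∨ i = t
    · have hq : l.1 = s ∨ l.1 = t := by rw [hli.1]; exact hi
      have hWpos : 0 < ‖z' s‖ ^ 2 + ‖z' t‖ ^ 2 := by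
        rw [hW']
        have h1 : 0 < ‖z i‖ ^ 2 := pow_pos (norm_pos_iff.mpr hzi) 2
        rw [hWdef]
        rcases hi with rfl | rfl
        · exact add_pos_of_pos_of_nonneg h1 (sq_nonneg _)
        · exact add_pos_of_nonneg_of_pos (sq_nonneg _) h1
      obtain ⟨hab, hra, hrb⟩ := ratio_lemma s t hstne R T z i hi hzi l hli hWpos
      rw [step_eq_in c s t hstne R T hBs hRc hTc hDe hSh l hq hab, hra, hrb]
      rw [← hz'def, hW', ← hcs, ← hct]
      have hGl : G l = cs • Measure.dirac (gMap s t R T s l)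
          + ct • Measure.dirac (gMap s t R T t l) := by
        rw [hGdef]; exact if_pos hq
      rw [hGl]
    · have hq : ¬(l.1 = s ∨ l.1 = t) := by rw [hli.1]; exact hi
      rw [step_eq_notin c s t hstne R T hBs hRc hTc hDe hSh l hq]
      have hGl : G l = Measure.dirac (gMap s t R T l.1 l) := by
        rw [hGdef]; exact if_neg hq
      rw [hGl]
  have hScompl : ∀ i, z i ≠ 0 → f i Sᶜ = 0 := by
    intro i hzi
    have hsub : Sᶜ ⊆ (lamSet z i)ᶜ := Set.compl_subset_compl.mpr (by
      intro l hl
      rw [hSdef]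
      exact Set.mem_iUnion.mpr ⟨i, Set.mem_iUnion.mpr ⟨hzi, hl⟩⟩)
    refine measure_mono_null hsub ?_
    haveI := hfprob i hzi
    rw [measure_compl (measurable_lamSet z i) (measure_ne_top _ _), hfconc i hzi,
      measure_univ, tsub_self]
  have hpS : p Sᶜ = 0 := by
    rw [hpsum, Measure.finset_sum_apply]
    apply Finset.sum_eq_zero
    intro i _
    rw [Measure.smul_apply, smul_eq_mul]
    by_cases hzi : z i = 0
    · simp [hzi]
    · rw [hScompl i hzi, mul_zero]
  have hae : step c =ᵐ[p] G := by
    rw [Filter.EventuallyEq, ae_iff]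
    exact measure_mono_null (fun l hl hS => hl (hstepG l hS)) hpS
  have hout : out c p = p.bind G := by
    unfold out Measure.bind
    rw [Measure.map_congr hae]
  -- the witness family of measures
  set F : Fin N → Measure (Lam N) := fun m =>
    if m = s then cs' • (f s).map (gMap s t R T s) + ct' • (f t).map (gMap s t R T s)
    else if m = t then cs' • (f s).map (gMap s t R T t) + ct' • (f t).map (gMap s t R T t)
    else (f m).map (gMap s t R T m) with hFdef
  have haefi : ∀ i, z i ≠ 0 → ∀ᵐ l ∂(f i), l ∈ lamSet z i := by
    intro i hzi
    rw [ae_iff]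
    have h : {l : Lam N | ¬ l ∈ lamSet z i} = (lamSet z i)ᶜ := rfl
    rw [h]
    haveI := hfprob i hzi
    rw [measure_compl (measurable_lamSet z i) (measure_ne_top _ _), hfconc i hzi,
      measure_univ, tsub_self]
  refine ⟨F, ?_, ?_⟩
  · -- each F m is in the class [z']_m
    intro m hzm
    by_cases hms : m = s
    · subst hms
      have hWne : W ≠ 0 := by
        intro h0
        rw [hWdef] at h0
        have h1 : ‖z m‖ = 0 := by nlinarith [sq_nonneg (‖z m‖), sq_nonneg (‖z t‖), norm_nonneg (z m), norm_nonneg (z t)]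
        have h2 : ‖z t‖ = 0 := by nlinarith [sq_nonneg (‖z m‖), sq_nonneg (‖z t‖), norm_nonneg (z m), norm_nonneg (z t)]
        exact hzm (by rw [hz's, norm_eq_zero.mp h1, norm_eq_zero.mp h2]; ring)
      have hsum1 : cs' + ct' = 1 := by
        rw [hcs', hct', ← ENNReal.ofReal_add (div_nonneg (sq_nonneg _) hW0)
          (div_nonneg (sq_nonneg _) hW0), ← add_div, ← hWdef, div_self hWne,
          ENNReal.ofReal_one]
      have hmap1 : ∀ i, i = m ∨ i = t → z i ≠ 0 →
          (f i).map (gMap m t R T m) (lamSet z' m) = 1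
            ∧ (f i).map (gMap m t R T m) Set.univ = 1 := by
        intro i hi hzi
        haveI := hfprob i hzi
        constructor
        · rw [Measure.map_apply (meas_gMap m t R T m) (measurable_lamSet z' m)]
          refine le_antisymm prob_le_one ?_
          rw [← hfconc i hzi]
          exact measure_mono (fun l hl => (gMap_mem_in m t hstne R T z i hi l hl).1)
        · rw [Measure.map_apply (meas_gMap m t R T m) MeasurableSet.univ]
          rw [Set.preimage_univ, measure_univ]
      have hterm : ∀ A : Set (Lam N),
          (∀ i, i = m ∨ i = t → z i ≠ 0 → (f i).map (gMap m t R T m) A = 1) →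
          (cs' • (f m).map (gMap m t R T m) + ct' • (f t).map (gMap m t R T m)) A = 1 := by
        intro A hA1
        simp only [Measure.add_apply, Measure.smul_apply, smul_eq_mul]
        have h1 : cs' * (f m).map (gMap m t R T m) A = cs' := by
          by_cases hzs : z m = 0
          · simp [hcs', hzs]
          · rw [hA1 m (Or.inl rfl) hzs, mul_one]
        have h2 : ct' * (f t).map (gMap m t R T m) A = ct' := by
          by_cases hzt : z t = 0
          · simp [hct', hzt]
          · rw [hA1 t (Or.inr rfl) hzt, mul_one]
        rw [h1, h2, hsum1]
      have hFm : F m = cs' • (f m).map (gMap m t R T m) + ct' • (f t).map (gMap m t R T m) := by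
        rw [hFdef]; exact if_pos rfl
      rw [hFm]
      refine ⟨⟨?_⟩, ?_⟩
      · exact hterm Set.univ (fun i hi hzi => (hmap1 i hi hzi).2)
      · exact hterm (lamSet z' m) (fun i hi hzi => (hmap1 i hi hzi).1)
    · by_cases hmt : m = t
      · subst hmt
        have hWne : W ≠ 0 := by
          intro h0
          rw [hWdef] at h0
          have h1 : ‖z s‖ = 0 := by nlinarith [sq_nonneg (‖z s‖), sq_nonneg (‖z m‖), norm_nonneg (z s), norm_nonneg (z m)]
          have h2 : ‖z m‖ = 0 := by nlinarith [sq_nonneg (‖z s‖), sq_nonneg (‖z m‖), norm_nonneg (z s), norm_nonneg (z m)]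
          exact hzm (by rw [hz't, norm_eq_zero.mp h1, norm_eq_zero.mp h2]; ring)
        have hsum1 : cs' + ct' = 1 := by
          rw [hcs', hct', ← ENNReal.ofReal_add (div_nonneg (sq_nonneg _) hW0)
            (div_nonneg (sq_nonneg _) hW0), ← add_div, ← hWdef, div_self hWne,
            ENNReal.ofReal_one]
        have hmap1 : ∀ i, i = s ∨ i = m → z i ≠ 0 →
            (f i).map (gMap s m R T m) (lamSet z' m) = 1
              ∧ (f i).map (gMap s m R T m) Set.univ = 1 := by
          intro i hi hzi
          haveI := hfprob i hzi
          constructor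
          · rw [Measure.map_apply (meas_gMap s m R T m) (measurable_lamSet z' m)]
            refine le_antisymm prob_le_one ?_
            rw [← hfconc i hzi]
            exact measure_mono (fun l hl => (gMap_mem_in s m hstne R T z i hi l hl).2)
          · rw [Measure.map_apply (meas_gMap s m R T m) MeasurableSet.univ]
            rw [Set.preimage_univ, measure_univ]
        have hterm : ∀ A : Set (Lam N),
            (∀ i, i = s ∨ i = m → z i ≠ 0 → (f i).map (gMap s m R T m) A = 1) →
            (cs' • (f s).map (gMap s m R T m) + ct' • (f m).map (gMap s m R T m)) A = 1 := by
          intro A hA1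
          simp only [Measure.add_apply, Measure.smul_apply, smul_eq_mul]
          have h1 : cs' * (f s).map (gMap s m R T m) A = cs' := by
            by_cases hzs : z s = 0
            · simp [hcs', hzs]
            · rw [hA1 s (Or.inl rfl) hzs, mul_one]
          have h2 : ct' * (f m).map (gMap s m R T m) A = ct' := by
            by_cases hzt : z m = 0
            · simp [hct', hzt]
            · rw [hA1 m (Or.inr rfl) hzt, mul_one]
          rw [h1, h2, hsum1]
        have hFm : F m = cs' • (f s).map (gMap s m R T m) + ct' • (f m).map (gMap s m R T m) := by
          rw [hFdef]
          simp only [if_neg hms, if_pos rfl, if_true]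
        rw [hFm]
        refine ⟨⟨?_⟩, ?_⟩
        · exact hterm Set.univ (fun i hi hzi => (hmap1 i hi hzi).2)
        · exact hterm (lamSet z' m) (fun i hi hzi => (hmap1 i hi hzi).1)
      · -- free path
        have hzm' : z m ≠ 0 := (hz'ne m hms hmt) ▸ hzm
        haveI := hfprob m hzm'
        have hFm : F m = (f m).map (gMap s t R T m) := by
          rw [hFdef]
          simp only [if_neg hms, if_neg hmt]
        rw [hFm]
        haveI hprobmap : IsProbabilityMeasure ((f m).map (gMap s t R T m)) :=
          Measure.isProbabilityMeasure_map (meas_gMap s t R T m).aemeasurable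
        refine ⟨hprobmap, ?_⟩
        rw [Measure.map_apply (meas_gMap s t R T m) (measurable_lamSet z' m)]
        refine le_antisymm prob_le_one ?_
        rw [← hfconc m hzm']
        refine measure_mono (fun l hl => ?_)
        exact gMap_mem_notin s t hstne R T z m
          (fun h => by rcases h with h | h; exacts [hms h, hmt h]) l hl
  · -- the measure identity
    rw [hout]
    ext A hA
    rw [Measure.bind_apply hA hGmeas.aemeasurable, hpsum, lintegral_finset_sum_measure]
    simp_rw [lintegral_smul_measure]
    rw [Measure.finset_sum_apply]
    have hTi : ∀ i, z i ≠ 0 → ∫⁻ l, G l A ∂(f i) =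
        if i = s ∨ i = t then
          cs * (f i).map (gMap s t R T s) A + ct * (f i).map (gMap s t R T t) A
        else (f i).map (gMap s t R T i) A := by
      intro i hzi
      by_cases hi : i = s ∨ i = t
      · rw [if_pos hi]
        have hcg : ∀ᵐ l ∂(f i), G l A
            = (cs • Measure.dirac (gMap s t R T s l)
              + ct • Measure.dirac (gMap s t R T t l) : Measure (Lam N)) A := by
          filter_upwards [haefi i hzi] with l hl
          have hq : l.1 = s ∨ l.1 = t := by rw [hl.1]; exact hi
          have hGl : G l = cs • Measure.dirac (gMap s t R T s l)
              + ct • Measure.dirac (gMap s t R T t l) := by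
            rw [hGdef]; exact if_pos hq
          rw [hGl]
        rw [lintegral_congr_ae hcg,
          lintegral_two_dirac (meas_gMap s t R T s) (meas_gMap s t R T t) cs ct (f i) hA]
      · rw [if_neg hi]
        have hcg : ∀ᵐ l ∂(f i), G l A = Measure.dirac (gMap s t R T i l) A := by
          filter_upwards [haefi i hzi] with l hl
          have hq : ¬(l.1 = s ∨ l.1 = t) := by rw [hl.1]; exact hi
          have hGl : G l = Measure.dirac (gMap s t R T l.1 l) := by
            rw [hGdef]; exact if_neg hq
          rw [hGl, hl.1]
        rw [lintegral_congr_ae hcg, lintegral_dirac_comp (meas_gMap s t R T i) (f i) hA]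
    have hsplit : ∀ Q : Fin N → ENNReal,
        ∑ i, Q i = (∑ i ∈ (Finset.univ \ {s, t} : Finset (Fin N)), Q i) + (Q s + Q t) := by
      intro Q
      rw [← Finset.sum_sdiff (Finset.subset_univ ({s, t} : Finset (Fin N))),
        Finset.sum_pair hstne]
    simp only [smul_eq_mul]
    rw [hsplit (fun i => ENNReal.ofReal (‖z i‖ ^ 2) * ∫⁻ l, G l A ∂(f i)),
      hsplit (fun m => (ENNReal.ofReal (‖z' m‖ ^ 2) • F m) A)]
    congr 1
    · -- the free paths
      apply Finset.sum_congr rfl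
      intro m hm
      simp only [Finset.mem_sdiff, Finset.mem_insert, Finset.mem_singleton] at hm
      push_neg at hm
      obtain ⟨-, hms, hmt⟩ := hm
      rw [Measure.smul_apply, smul_eq_mul]
      have hFm : F m A = (f m).map (gMap s t R T m) A := by
        rw [hFdef]
        simp only [if_neg hms, if_neg hmt]
      rw [hFm, hz'ne m hms hmt]
      by_cases hzm : z m = 0
      · simp [hzm]
      · rw [hTi m hzm, if_neg (fun h => by rcases h with h | h; exacts [hms h, hmt h])]
    · -- the beam-splitter paths
      simp only [Measure.smul_apply, smul_eq_mul]
      have hFsA : F s A = cs' * (f s).map (gMap s t R T s) A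
          + ct' * (f t).map (gMap s t R T s) A := by
        rw [hFdef]
        simp only [if_pos rfl, if_true, Measure.add_apply, Measure.smul_apply, smul_eq_mul]
      have hFtA : F t A = cs' * (f s).map (gMap s t R T t) A
          + ct' * (f t).map (gMap s t R T t) A := by
        rw [hFdef]
        simp only [if_neg (Ne.symm hstne : t ≠ s), if_pos rfl, if_true, Measure.add_apply,
          Measure.smul_apply, smul_eq_mul]
      rw [hFsA, hFtA]
      have hscal : ∀ x y : Fin N,
          ENNReal.ofReal (‖z x‖ ^ 2) * ENNReal.ofReal (‖z' y‖ ^ 2 / W)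
            = ENNReal.ofReal (‖z' y‖ ^ 2) * ENNReal.ofReal (‖z x‖ ^ 2 / W) := by
        intro x y
        rw [← ENNReal.ofReal_mul (sq_nonneg _), ← ENNReal.ofReal_mul (sq_nonneg _)]
        congr 1
        ring
      have hLs : ENNReal.ofReal (‖z s‖ ^ 2) * ∫⁻ l, G l A ∂(f s)
          = ENNReal.ofReal (‖z' s‖ ^ 2) * (cs' * (f s).map (gMap s t R T s) A)
            + ENNReal.ofReal (‖z' t‖ ^ 2) * (cs' * (f s).map (gMap s t R T t) A) := by
        by_cases hzs : z s = 0
        · have hcz : cs' = 0 := by simp [hcs', hzs]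
          simp [hzs, hcz]
        · rw [hTi s hzs, if_pos (Or.inl rfl), mul_add, hcs, hct,
            ← mul_assoc, ← mul_assoc, hscal s s, hscal s t, ← hcs']
          ring
      have hLt : ENNReal.ofReal (‖z t‖ ^ 2) * ∫⁻ l, G l A ∂(f t)
          = ENNReal.ofReal (‖z' s‖ ^ 2) * (ct' * (f t).map (gMap s t R T s) A)
            + ENNReal.ofReal (‖z' t‖ ^ 2) * (ct' * (f t).map (gMap s t R T t) A) := by
        by_cases hzt : z t = 0
        · have hcz : ct' = 0 := by simp [hct', hzt]
          simp [hzt, hcz]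
        · rw [hTi t hzt, if_pos (Or.inr rfl), mul_add, hcs, hct,
            ← mul_assoc, ← mul_assoc, hscal t s, hscal t t, ← hct']
          ring
      rw [hLs, hLt]
      ring

end SPI
end
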